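/- Let X be a free ℤ-module with a finite basis Π. Let M be a finite subset of X such that each α ∈ M equals the sum Σ_{δ ∈ S_α} δ of the elements of some nonempty subset S_α ⊆ Π, and such that for every α ∈ M the set S_α is not contained in the union ⋃_{β ∈ M, β ≠ α} S_β. Then the submodule of X generated by M is primitive, i.e., the quotient X/⟨M⟩ is torsion-free. -/

import Mathlib

/-- Let `X` be a free `ℤ`-module with finite basis `Π`, and `M` a finite set of elements
each equal to the sum of the basis vectors in some nonempty subset `S α ⊆ Π`, such that no
`S α` is contained in the union of the other supports. Then the submodule generated by `M`
is primitive: the quotient `X/⟨M⟩` is torsion-free. -/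
theorem span_of_supports_is_primitive
    {X : Type*} [AddCommGroup X] {ι : Type*} [Fintype ι]
    (b : Module.Basis ι ℤ X) (M : Finset X) (S : X → Finset ι)
    (hS : ∀ α ∈ M, (S α).Nonempty ∧ α = ∑ δ ∈ S α, b δ)
    (hC : ∀ α ∈ M, ∃ δ ∈ S α, ∀ β ∈ M, β ≠ α → δ ∉ S β) :
    ∀ (y : X ⧸ Submodule.span ℤ (M : Set X)) (n : ℤ), n ≠ 0 → n • y = 0 → y = 0 := by
  intro y n hn hny
  obtain ⟨x, rfl⟩ := Submodule.Quotient.mk_surjective _ y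
  have hx : n • x ∈ Submodule.span ℤ (M : Set X) := by
    rwa [← Submodule.Quotient.mk_eq_zero, Submodule.Quotient.mk_smul]
  obtain ⟨f, -, hf⟩ := Submodule.mem_span_finset.mp hx
  classical
  -- coordinates of a sum of basis vectors
  have coordsum : ∀ (s : Finset ι) (δ : ι),
      b.repr (∑ i ∈ s, b i) δ = if δ ∈ s then 1 else 0 := by
    intro s δ
    rw [map_sum, Finsupp.finset_sum_apply]
    simp [b.repr_self, Finsupp.single_apply, Finset.sum_ite_eq]
  -- each coefficient is divisible by n
  have coordβ : ∀ β ∈ M, ∀ δ : ι, b.repr β δ = if δ ∈ S β then 1 else 0 := by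
    intro β hβ δ
    conv_lhs => rw [(hS β hβ).2]
    exact coordsum _ _
  have hdvd : ∀ α ∈ M, n ∣ f α := by
    intro α hα
    obtain ⟨δ, hδS, hδ⟩ := hC α hα
    have hcoord : b.repr (n • x) δ = f α := by
      rw [← hf, map_sum, Finsupp.finset_sum_apply]
      rw [Finset.sum_eq_single α]
      · rw [map_smul, Finsupp.smul_apply, coordβ α hα, if_pos hδS,
          smul_eq_mul, mul_one]
      · intro β hβ hβα
        rw [map_smul, Finsupp.smul_apply, coordβ β hβ,
          if_neg (hδ β hβ hβα), smul_zero]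
      · intro h; exact absurd hα h
    refine ⟨b.repr x δ, ?_⟩
    rw [← hcoord, map_smul, Finsupp.smul_apply, smul_eq_mul]
  -- the element x is itself in the span
  set z : X := ∑ α ∈ M, (f α / n) • α with hz
  have hzspan : z ∈ Submodule.span ℤ (M : Set X) :=
    Submodule.sum_smul_mem _ _ (fun α hα => Submodule.subset_span hα)
  have hnz : n • z = n • x := by
    rw [hz, Finset.smul_sum, ← hf]
    refine Finset.sum_congr rfl fun α hα => ?_
    rw [smul_smul, Int.mul_ediv_cancel' (hdvd α hα)]
  have hxz : x = z := by
    have : b.repr (n • (x - z)) = 0 := by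
      rw [smul_sub, hnz, sub_self, map_zero]
    have h2 : n • b.repr (x - z) = 0 := by rwa [map_smul] at this
    have h3 : b.repr (x - z) = 0 := (smul_eq_zero.mp h2).resolve_left hn
    have h4 : x - z = 0 := by
      have := b.repr.injective (by rw [h3, map_zero] : b.repr (x - z) = b.repr 0)
      exact this
    exact sub_eq_zero.mp h4
  rw [Submodule.Quotient.mk_eq_zero, hxz]
  exact hzspan
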